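/- arXiv:1904.10215 — 2 statements merged into one kernel-verified Lean document; each statement's English description precedes it below -/
import Mathlib

section
/- The multiset A output by the modified greedy algorithm is feasible, and every feasible multiset U (i.e., every multiset with m_U(T_i) ≤ d_i for all i whose load on every object o is at most k_o) satisfies |U| ≤ M·|A|, where |·| denotes total cardinality counted with multiplicities. That is, the modified greedy algorithm, which processes each distinct subtree exactly once regardless of its demand, is an M-approximation for the multiset (demand) version of the problem. -/
/-!
Demand (multiset) version. `G` is a finite tree rooted at `r`, with `n` *distinct*
subtrees given by their vertex sets `S i` (connected subgraphs of the tree), each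
with a positive demand `d i`; the subtrees are indexed so that their roots appear
in nondecreasing order along some post-order traversal (encoded by `pos`). A
multiset over the subtrees is a multiplicity function `m : Fin n → ℕ`; it is
feasible if `m i ≤ d i` for all `i` and its load on every object is at most the
capacity of that object. The modified greedy algorithm processes each distinct
subtree exactly once, adding it with multiplicity `min (d i) c` where `c` is the
minimum remaining capacity over the objects of the subtree.
-/

open Finset

attribute [local instance] Classical.propDecidable

/-- An *object* of a graph on vertex type `V`: a vertex or a (potential) edge. -/
abbrev Object (V : Type) := V ⊕ Sym2 V

/-- The subtree of `G` with vertex set `s` contains the object `o`. -/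
def ContainsObj {V : Type} (G : SimpleGraph V) (s : Finset V) : Object V → Prop
  | Sum.inl v => v ∈ s
  | Sum.inr e => e ∈ G.edgeSet ∧ ∀ x ∈ e, x ∈ s

/-- The load induced by the multiset with multiplicities `m` on the object `o`. -/
noncomputable def mload {V : Type} [Fintype V] {n : ℕ} (G : SimpleGraph V)
    (S : Fin n → Finset V) (m : Fin n → ℕ) (o : Object V) : ℕ :=
  ∑ i ∈ univ.filter (fun i => ContainsObj G (S i) o), m i

/-- A multiset with multiplicities `m` is feasible if `m i ≤ d i` for every `i`
and no object is overloaded. -/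
def FeasibleM {V : Type} [Fintype V] {n : ℕ} (G : SimpleGraph V)
    (S : Fin n → Finset V) (k : Object V → ℕ) (d : Fin n → ℕ) (m : Fin n → ℕ) : Prop :=
  (∀ i, m i ≤ d i) ∧ ∀ o : Object V, mload G S m o ≤ k o

/-- The modified greedy algorithm: each distinct subtree is processed exactly once
(in the given bottom-up order); when `T_i` is processed, it is added with
multiplicity `min (d i) c`, where `c` is the minimum of `k o - (current load on o)`
over all objects `o` of `T_i`. -/
noncomputable def greedyM {V : Type} [Fintype V] [DecidableEq V] {n : ℕ}
    (G : SimpleGraph V) (S : Fin n → Finset V) (k : Object V → ℕ) (d : Fin n → ℕ) :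
    ℕ → Fin n → ℕ
  | 0 => fun _ => 0
  | t + 1 =>
    if h : t < n then
      let i : Fin n := ⟨t, h⟩
      let prev := greedyM G S k d t
      let objs : Finset (Object V) := univ.filter fun o => ContainsObj G (S i) o
      let c : ℕ :=
        if hne : objs.Nonempty then objs.inf' hne fun o => k o - mload G S prev o
        else 0
      Function.update prev i (min (d i) c)
    else greedyM G S k d t

/-- `v` is an ancestor of `u` in the tree `G` rooted at `r`. -/
def IsAnc {V : Type} (G : SimpleGraph V) (r v u : V) : Prop :=
  G.dist r u = G.dist r v + G.dist v u

/-- The number of leaves of the subtree with vertex set `s` that differ from its root `rt`. -/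
noncomputable def leavesCnt {V : Type} [DecidableEq V] (G : SimpleGraph V)
    (s : Finset V) (rt : V) : ℕ :=
  (s.filter fun v => v ≠ rt ∧ (s.filter fun u => G.Adj v u).card ≤ 1).card



namespace MGAux

variable {V : Type} {G : SimpleGraph V} {r : V}

lemma len_eq_dist (hT : G.IsTree) {u v : V} (p : G.Walk u v) (hp : p.IsPath) :
    p.length = G.dist u v := by
  obtain ⟨q, hq⟩ := hT.isConnected.exists_walk_length_eq_dist u v
  have h1 : p = q.bypass := by
    have := hT.IsAcyclic.path_unique ⟨p, hp⟩ ⟨q.bypass, q.bypass_isPath⟩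
    exact congrArg Subtype.val this
  have h2 : q.bypass.length ≤ q.length := SimpleGraph.Walk.length_bypass_le q
  have h3 : G.dist u v ≤ q.bypass.length := SimpleGraph.dist_le _
  rw [h1]; omega

lemma split_dist (hT : G.IsTree) {u v y : V} (p : G.Walk u v) (hp : p.IsPath)
    (hy : y ∈ p.support) : G.dist u y + G.dist y v = G.dist u v := by
  have h1 := len_eq_dist hT _ (hp.takeUntil hy)
  have h2 := len_eq_dist hT _ (hp.dropUntil hy)
  have h3 : (p.takeUntil y hy).length + (p.dropUntil y hy).length = p.length := by
    rw [← SimpleGraph.Walk.length_append, p.take_spec hy]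
  have h4 := len_eq_dist hT p hp
  omega

lemma mem_path_of_between (hT : G.IsTree) {u v x : V}
    (h : G.dist u x + G.dist x v = G.dist u v)
    (p : G.Walk u v) (hp : p.IsPath) : x ∈ p.support := by
  classical
  obtain ⟨w1⟩ := hT.isConnected u x
  obtain ⟨w2⟩ := hT.isConnected x v
  set p1 := w1.bypass with hp1def
  set p2 := w2.bypass with hp2def
  have hp1 : p1.IsPath := w1.bypass_isPath
  have hp2 : p2.IsPath := w2.bypass_isPath
  have hlen1 := len_eq_dist hT p1 hp1
  have hlen2 := len_eq_dist hT p2 hp2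
  -- supports of p1 and p2 intersect only at x
  have hint : ∀ y, y ∈ p1.support → y ∈ p2.support → y = x := by
    intro y hy1 hy2
    have d1 := split_dist hT p1 hp1 hy1
    have d2 := split_dist hT p2 hp2 hy2
    have tri : G.dist u v ≤ G.dist u y + G.dist y v := hT.isConnected.dist_triangle
    have hcomm : G.dist x y = G.dist y x := SimpleGraph.dist_comm
    have h0 : G.dist x y = 0 := by omega
    exact ((hT.isConnected.dist_eq_zero_iff).mp h0).symm
  have happ : (p1.append p2).IsPath := by
    rw [SimpleGraph.Walk.isPath_def, SimpleGraph.Walk.support_append]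
    apply List.Nodup.append hp1.support_nodup (hp2.support_nodup.sublist (List.tail_sublist _))
    intro y hy1 hy2
    have hy2' : y ∈ p2.support := List.mem_of_mem_tail hy2
    have hxy : y = x := hint y hy1 hy2'
    subst hxy
    have : p2.support = y :: p2.support.tail := p2.support_eq_cons
    have hnd := hp2.support_nodup
    rw [this] at hnd
    exact (List.nodup_cons.mp hnd).1 hy2
  have : p = p1.append p2 := by
    have := hT.IsAcyclic.path_unique ⟨p, hp⟩ ⟨p1.append p2, happ⟩
    exact congrArg Subtype.val this
  rw [this, SimpleGraph.Walk.mem_support_append_iff]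
  exact Or.inl p1.end_mem_support

lemma adj_updown (hT : G.IsTree) (r : V) {w w' : V} (h : G.Adj w w') :
    (IsAnc G r w w' ∧ G.dist r w' = G.dist r w + 1) ∨
    (IsAnc G r w' w ∧ G.dist r w = G.dist r w' + 1) := by
  classical
  obtain ⟨w0⟩ := hT.isConnected r w
  set p := w0.bypass with hpdef
  have hp : p.IsPath := w0.bypass_isPath
  have hlen := len_eq_dist hT p hp
  have hdadj : G.dist w w' = 1 := by
    have h1 : G.dist w w' ≤ 1 := by
      have := SimpleGraph.dist_le (SimpleGraph.Walk.cons h SimpleGraph.Walk.nil)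
      simpa using this
    have h2 : 0 < G.dist w w' := hT.isConnected.pos_dist_of_ne h.ne
    omega
  have hdadj' : G.dist w' w = 1 := by rw [SimpleGraph.dist_comm]; exact hdadj
  by_cases hmem : w' ∈ p.support
  · right
    have := split_dist hT p hp hmem
    constructor
    · unfold IsAnc; omega
    · omega
  · left
    have hq : (p.concat h).IsPath := by
      rw [SimpleGraph.Walk.isPath_def, SimpleGraph.Walk.support_concat]
      have := List.Nodup.concat hmem hp.support_nodup
      rwa [List.concat_eq_append] at this
    have hlenq : (p.concat h).length = G.dist r w' := len_eq_dist hT _ hq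
    have hlc : (p.concat h).length = p.length + 1 := SimpleGraph.Walk.length_concat _ _
    have hmemw : w ∈ (p.concat h).support := by
      rw [SimpleGraph.Walk.support_concat]
      simp only [List.concat_eq_append, List.mem_append, List.mem_singleton]
      exact Or.inl p.end_mem_support
    have := split_dist hT _ hq hmemw
    constructor
    · unfold IsAnc; omega
    · omega

section Anc

lemma anc_refl (v : V) : IsAnc G r v v := by
  unfold IsAnc; simp [SimpleGraph.dist_self]

lemma anc_trans (hc : G.Connected) {a b c : V} (h1 : IsAnc G r a b) (h2 : IsAnc G r b c) :
    IsAnc G r a c := by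
  unfold IsAnc at *
  have t1 : G.dist a c ≤ G.dist a b + G.dist b c := hc.dist_triangle
  have t2 : G.dist r c ≤ G.dist r a + G.dist a c := hc.dist_triangle
  omega

lemma anc_antisymm (hc : G.Connected) {a b : V} (h1 : IsAnc G r a b) (h2 : IsAnc G r b a) :
    a = b := by
  unfold IsAnc at *
  have h0 : G.dist a b = 0 := by omega
  exact (hc.dist_eq_zero_iff).mp h0

lemma anc_dist_le (hc : G.Connected) {a b : V} (h : IsAnc G r a b) :
    G.dist r a ≤ G.dist r b := by
  unfold IsAnc at h; omega

/-- Two ancestors of a common vertex are comparable (via the post-order hypotheses). -/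
lemma anc_total (pos : V → ℕ)
    (hpost : ∀ u v : V, IsAnc G r v u → pos u ≤ pos v)
    (hcontig : ∀ u x v : V, IsAnc G r v u → pos u ≤ pos x → pos x ≤ pos v → IsAnc G r v x)
    {a b w : V} (ha : IsAnc G r a w) (hb : IsAnc G r b w) :
    IsAnc G r a b ∨ IsAnc G r b a := by
  rcases le_total (pos a) (pos b) with hle | hle
  · exact Or.inr (hcontig w a b hb (hpost w a ha) hle)
  · exact Or.inl (hcontig w b a ha (hpost w b hb) hle)

lemma anc_of_dist_le (hc : G.Connected) (pos : V → ℕ)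
    (hpost : ∀ u v : V, IsAnc G r v u → pos u ≤ pos v)
    (hcontig : ∀ u x v : V, IsAnc G r v u → pos u ≤ pos x → pos x ≤ pos v → IsAnc G r v x)
    {a b w : V} (ha : IsAnc G r a w) (hb : IsAnc G r b w)
    (hd : G.dist r a ≤ G.dist r b) : IsAnc G r a b := by
  rcases anc_total pos hpost hcontig ha hb with h | h
  · exact h
  · have := anc_dist_le (r := r) hc h
    have h0 : G.dist r a = G.dist r b := le_antisymm hd this
    unfold IsAnc at h ⊢
    have : G.dist b a = 0 := by omega
    have hba : b = a := (hc.dist_eq_zero_iff).mp this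
    subst hba
    simp [SimpleGraph.dist_self]

lemma anc_eq_of_dist_eq (hc : G.Connected) (pos : V → ℕ)
    (hpost : ∀ u v : V, IsAnc G r v u → pos u ≤ pos v)
    (hcontig : ∀ u x v : V, IsAnc G r v u → pos u ≤ pos x → pos x ≤ pos v → IsAnc G r v x)
    {a b w : V} (ha : IsAnc G r a w) (hb : IsAnc G r b w)
    (hd : G.dist r a = G.dist r b) : a = b := by
  have h1 := anc_of_dist_le hc pos hpost hcontig ha hb (le_of_eq hd)
  unfold IsAnc at h1
  have : G.dist a b = 0 := by omega
  exact (hc.dist_eq_zero_iff).mp this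

lemma anc_between_dist (hc : G.Connected) {u q v : V}
    (h1 : IsAnc G r u q) (h2 : IsAnc G r q v) :
    G.dist u q + G.dist q v = G.dist u v := by
  have h3 := anc_trans (r := r) hc h1 h2
  unfold IsAnc at *
  omega

end Anc

/-- Betweenness membership: connected subgraphs of a tree contain all vertices between
two of their vertices. -/
lemma between_mem (hT : G.IsTree) {s : Finset V}
    (hsC : (G.induce (s : Set V)).Connected) {u v x : V}
    (hu : u ∈ s) (hv : v ∈ s) (hd : G.dist u x + G.dist x v = G.dist u v) : x ∈ s := by
  classical
  obtain ⟨w0⟩ := hsC ⟨u, hu⟩ ⟨v, hv⟩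
  have hwalk : ∃ W : G.Walk u v, ∀ y ∈ W.support, y ∈ s := by
    refine ⟨w0.map (SimpleGraph.Embedding.induce (s : Set V)).toHom, ?_⟩
    intro y hy
    replace hy : y ∈ w0.support.map (SimpleGraph.Embedding.induce (G := G) (s : Set V)).toHom := by
      rw [← SimpleGraph.Walk.support_map]; exact hy
    obtain ⟨z, hz, rfl⟩ := List.mem_map.mp hy
    exact z.2
  obtain ⟨W, hW⟩ := hwalk
  have hx : x ∈ W.bypass.support :=
    mem_path_of_between hT hd W.bypass W.bypass_isPath
  exact hW x (W.support_bypass_subset hx)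

/-- Every vertex of a connected subgraph is a descendant of its minimum-depth vertex. -/
lemma root_anc (hT : G.IsTree) {s : Finset V} (hsC : (G.induce (s : Set V)).Connected)
    {rt : V} (hrtm : rt ∈ s) (hmin : ∀ v ∈ s, G.dist r rt ≤ G.dist r v)
    (pos : V → ℕ)
    (hpost : ∀ u v : V, IsAnc G r v u → pos u ≤ pos v)
    (hcontig : ∀ u x v : V, IsAnc G r v u → pos u ≤ pos x → pos x ≤ pos v → IsAnc G r v x)
    {v : V} (hv : v ∈ s) : IsAnc G r rt v := by
  classical
  obtain ⟨w0⟩ := hsC ⟨rt, hrtm⟩ ⟨v, hv⟩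
  have key : ∀ (a b : (s : Set V)) (w : (G.induce (s : Set V)).Walk a b),
      IsAnc G r rt a → IsAnc G r rt b := by
    intro a b w
    induction w with
    | nil => exact fun h => h
    | @cons c e f hadj w ih =>
      intro hc
      apply ih
      have hadj' : G.Adj c.1 e.1 := hadj
      rcases adj_updown hT r hadj' with ⟨h1, _⟩ | ⟨h1, h2⟩
      · exact anc_trans (r := r) hT.isConnected hc h1
      · -- e is the parent of c; both rt and e are ancestors of c
        rcases anc_total pos hpost hcontig hc h1 with h | h
        · exact h
        · have hd1 : G.dist r rt ≤ G.dist r e.1 := hmin e.1 e.2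
          have := anc_dist_le (r := r) hT.isConnected h
          have heq : e.1 = rt := anc_eq_of_dist_eq hT.isConnected pos hpost hcontig h1 hc
            (le_antisymm this hd1)
          rw [heq]; exact anc_refl rt
  exact key ⟨rt, hrtm⟩ ⟨v, hv⟩ w0 (anc_refl rt)

end MGAux

namespace MGAux2

open MGAux

variable {V : Type} {G : SimpleGraph V}

/-- Validity of an object: an edge object must be an actual edge. -/
def OValid (G : SimpleGraph V) : Object V → Prop
  | Sum.inl _ => True
  | Sum.inr e => e ∈ G.edgeSet

lemma ovalid_of_contains {s : Finset V} {o : Object V} (h : ContainsObj G s o) :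
    OValid G o := by
  cases o with
  | inl v => trivial
  | inr e => exact h.1

/-- The (shallow, deep) endpoints of an object. -/
noncomputable def vpair (G : SimpleGraph V) (r : V) : Object V → V × V
  | Sum.inl v => (v, v)
  | Sum.inr e =>
    if h : ∃ pc : V × V, e = s(pc.1, pc.2) ∧ G.Adj pc.1 pc.2 ∧
        G.dist r pc.2 = G.dist r pc.1 + 1 ∧ IsAnc G r pc.1 pc.2 then h.choose else (r, r)

variable {r : V}

lemma vpair_inl (v : V) : vpair G r (Sum.inl v) = (v, v) := rfl

lemma vpair_inr_spec (hT : G.IsTree) {e : Sym2 V} (he : e ∈ G.edgeSet) :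
    e = s((vpair G r (Sum.inr e)).1, (vpair G r (Sum.inr e)).2) ∧
    G.Adj (vpair G r (Sum.inr e)).1 (vpair G r (Sum.inr e)).2 ∧
    G.dist r (vpair G r (Sum.inr e)).2 = G.dist r (vpair G r (Sum.inr e)).1 + 1 ∧
    IsAnc G r (vpair G r (Sum.inr e)).1 (vpair G r (Sum.inr e)).2 := by
  have hex : ∃ pc : V × V, e = s(pc.1, pc.2) ∧ G.Adj pc.1 pc.2 ∧
      G.dist r pc.2 = G.dist r pc.1 + 1 ∧ IsAnc G r pc.1 pc.2 := by
    induction e with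
    | _ a b =>
      have hab : G.Adj a b := he
      rcases adj_updown hT r hab with ⟨h1, h2⟩ | ⟨h1, h2⟩
      · exact ⟨(a, b), rfl, hab, h2, h1⟩
      · exact ⟨(b, a), Sym2.eq_swap, hab.symm, h2, h1⟩
  have : vpair G r (Sum.inr e) = hex.choose := by
    simp only [vpair]
    rw [dif_pos hex]
  rw [this]
  exact hex.choose_spec

/-- Cases description of `vpair` for a valid object. -/
lemma vpair_cases (hT : G.IsTree) {o : Object V} (hv : OValid G o) :
    (o = Sum.inl (vpair G r o).1 ∧ (vpair G r o).1 = (vpair G r o).2) ∨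
    (o = Sum.inr s((vpair G r o).1, (vpair G r o).2) ∧
      G.Adj (vpair G r o).1 (vpair G r o).2 ∧
      G.dist r (vpair G r o).2 = G.dist r (vpair G r o).1 + 1 ∧
      IsAnc G r (vpair G r o).1 (vpair G r o).2) := by
  cases o with
  | inl v => exact Or.inl ⟨rfl, rfl⟩
  | inr e =>
    obtain ⟨h1, h2, h3, h4⟩ := vpair_inr_spec (r := r) hT hv
    exact Or.inr ⟨by rw [← h1], h2, h3, h4⟩

lemma vpair_anc (hT : G.IsTree) {o : Object V} (hv : OValid G o) :
    IsAnc G r (vpair G r o).1 (vpair G r o).2 := by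
  rcases vpair_cases (r := r) hT hv with ⟨_, h⟩ | ⟨_, _, _, h⟩
  · rw [h]; exact anc_refl _
  · exact h

lemma vpair_shal_dist (hT : G.IsTree) {o : Object V} (hv : OValid G o) :
    G.dist r (vpair G r o).2 ≤ G.dist r (vpair G r o).1 + 1 := by
  rcases vpair_cases (r := r) hT hv with ⟨_, h⟩ | ⟨_, _, h, _⟩
  · rw [h]; omega
  · omega

lemma vpair_mem {s : Finset V} {o : Object V} (hT : G.IsTree) (h : ContainsObj G s o) :
    (vpair G r o).1 ∈ s ∧ (vpair G r o).2 ∈ s := by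
  cases o with
  | inl v => exact ⟨h, h⟩
  | inr e =>
    set pr := vpair G r (Sum.inr e) with hpr
    obtain ⟨h1, _, _, _⟩ := vpair_inr_spec (r := r) hT h.1
    rw [← hpr] at h1
    constructor
    · exact h.2 _ (by rw [h1]; exact Sym2.mem_mk_left _ _)
    · exact h.2 _ (by rw [h1]; exact Sym2.mem_mk_right _ _)

/-- If all (i.e. both) vertices of a valid object lie between two vertices of a connected
subgraph of the tree, then the subgraph contains the object. -/
lemma obj_mem (hT : G.IsTree) {s : Finset V} (hsC : (G.induce (s : Set V)).Connected)
    {o : Object V} (hv : OValid G o) {u w : V} (hu : u ∈ s) (hw : w ∈ s)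
    (h1 : IsAnc G r u (vpair G r o).1) (h2 : IsAnc G r (vpair G r o).2 w) :
    ContainsObj G s o := by
  have hc := hT.isConnected
  have hanc := vpair_anc (r := r) hT hv
  have hm1 : (vpair G r o).1 ∈ s := by
    apply between_mem hT hsC hu hw
    exact anc_between_dist (r := r) hc h1 (anc_trans (r := r) hc hanc h2)
  have hm2 : (vpair G r o).2 ∈ s := by
    apply between_mem hT hsC hu hw
    exact anc_between_dist (r := r) hc (anc_trans (r := r) hc h1 hanc) h2
  rcases vpair_cases (r := r) hT hv with ⟨ho, _⟩ | ⟨ho, hadj, _, _⟩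
  · rw [ho]; exact hm1
  · rw [ho]
    refine ⟨hadj, ?_⟩
    intro x hx
    rw [Sym2.mem_iff] at hx
    rcases hx with rfl | rfl
    · exact hm1
    · exact hm2

/-- Two valid objects whose deep vertices have a common descendant are comparable. -/
lemma comparable_of_common (hT : G.IsTree) (pos : V → ℕ)
    (hpost : ∀ u v : V, IsAnc G r v u → pos u ≤ pos v)
    (hcontig : ∀ u x v : V, IsAnc G r v u → pos u ≤ pos x → pos x ≤ pos v → IsAnc G r v x)
    {o1 o2 : Object V} (hv1 : OValid G o1) (hv2 : OValid G o2) {w : V}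
    (h1 : IsAnc G r (vpair G r o1).2 w) (h2 : IsAnc G r (vpair G r o2).2 w) :
    IsAnc G r (vpair G r o1).2 (vpair G r o2).1 ∨
    IsAnc G r (vpair G r o2).2 (vpair G r o1).1 ∨ o1 = o2 := by
  have hc := hT.isConnected
  have ha1 := vpair_anc (r := r) hT hv1
  have ha2 := vpair_anc (r := r) hT hv2
  -- shallow vertices are also ancestors of w
  have hs1 : IsAnc G r (vpair G r o1).1 w := anc_trans (r := r) hc ha1 h1
  have hs2 : IsAnc G r (vpair G r o2).1 w := anc_trans (r := r) hc ha2 h2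
  have key : ∀ (a b : Object V), OValid G a → OValid G b →
      IsAnc G r (vpair G r a).2 w → IsAnc G r (vpair G r b).2 w →
      G.dist r (vpair G r a).2 < G.dist r (vpair G r b).2 →
      IsAnc G r (vpair G r a).2 (vpair G r b).1 := by
    intro a b hva hvb haw hbw hlt
    have hsb : IsAnc G r (vpair G r b).1 w :=
      anc_trans (r := r) hc (vpair_anc (r := r) hT hvb) hbw
    apply anc_of_dist_le hc pos hpost hcontig haw hsb
    have := vpair_shal_dist (r := r) hT hvb
    omega
  rcases lt_trichotomy (G.dist r (vpair G r o1).2) (G.dist r (vpair G r o2).2) with hlt | heq | hgt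
  · exact Or.inl (key o1 o2 hv1 hv2 h1 h2 hlt)
  · -- equal depth: deep vertices coincide
    have hdeq : (vpair G r o1).2 = (vpair G r o2).2 :=
      anc_eq_of_dist_eq hc pos hpost hcontig h1 h2 heq
    rcases vpair_cases (r := r) hT hv1 with ⟨ho1, he1⟩ | ⟨ho1, hadj1, hd1, _⟩
    · -- o1 is a vertex
      right; left
      rw [← hdeq, ← he1]
      exact anc_refl _
    · rcases vpair_cases (r := r) hT hv2 with ⟨ho2, he2⟩ | ⟨ho2, hadj2, hd2, _⟩
      · -- o2 is a vertex, o1 is an edge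
        left
        rw [hdeq, ← he2]
        exact anc_refl _
      · -- both edges with the same deep vertex: parents coincide
        right; right
        have hp : (vpair G r o1).1 = (vpair G r o2).1 := by
          apply anc_eq_of_dist_eq hc pos hpost hcontig hs1 hs2
          rw [hdeq] at hd1
          omega
        rw [ho1, ho2, hp, hdeq]
  · exact Or.inr (Or.inl (key o2 o1 hv2 hv1 h2 h1 hgt))

end MGAux2

namespace MGAux3

open MGAux MGAux2

variable {V : Type} {G : SimpleGraph V}

/-- Descend from a vertex to a leaf of the subtree with vertex set `s`. -/
noncomputable def descend (G : SimpleGraph V) (r : V) (s : Finset V) : ℕ → V → V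
  | 0, v => v
  | (f + 1), v =>
    if h : ∃ u, u ∈ s ∧ G.Adj v u ∧ G.dist r u = G.dist r v + 1 then
      descend G r s f h.choose
    else v

variable {r : V} {s : Finset V}

lemma descend_mem : ∀ (f : ℕ) (v : V), v ∈ s → descend G r s f v ∈ s := by
  intro f
  induction f with
  | zero => intro v hv; exact hv
  | succ f ih =>
    intro v hv
    by_cases h : ∃ u, u ∈ s ∧ G.Adj v u ∧ G.dist r u = G.dist r v + 1
    · simp only [descend, dif_pos h]
      exact ih _ h.choose_spec.1
    · simp only [descend, dif_neg h]
      exact hv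

lemma descend_anc (hT : G.IsTree) : ∀ (f : ℕ) (v : V), IsAnc G r v (descend G r s f v) := by
  intro f
  induction f with
  | zero => intro v; exact anc_refl v
  | succ f ih =>
    intro v
    by_cases h : ∃ u, u ∈ s ∧ G.Adj v u ∧ G.dist r u = G.dist r v + 1
    · simp only [descend, dif_pos h]
      obtain ⟨hu1, hu2, hu3⟩ := h.choose_spec
      have hvc : IsAnc G r v h.choose := by
        rcases adj_updown hT r hu2 with ⟨h1, _⟩ | ⟨_, h2⟩
        · exact h1
        · omega
      exact anc_trans (r := r) hT.isConnected hvc (ih _)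
    · simp only [descend, dif_neg h]
      exact anc_refl v

lemma descend_dist_ge : ∀ (f : ℕ) (v : V),
    (∃ u, u ∈ s ∧ G.Adj (descend G r s f v) u ∧
      G.dist r u = G.dist r (descend G r s f v) + 1) →
    G.dist r v + f ≤ G.dist r (descend G r s f v) := by
  intro f
  induction f with
  | zero => intro v _; simp [descend]
  | succ f ih =>
    intro v hch
    by_cases h : ∃ u, u ∈ s ∧ G.Adj v u ∧ G.dist r u = G.dist r v + 1
    · have hd : descend G r s (f+1) v = descend G r s f h.choose := by
        simp only [descend, dif_pos h]
      rw [hd] at hch ⊢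
      have := ih h.choose hch
      have := h.choose_spec.2.2
      omega
    · have hd : descend G r s (f+1) v = v := by simp only [descend, dif_neg h]
      rw [hd] at hch
      exact absurd hch h

lemma dist_lt_card [Fintype V] (hT : G.IsTree) (u v : V) : G.dist u v < Fintype.card V := by
  obtain ⟨w0⟩ := hT.isConnected u v
  have h1 := len_eq_dist hT w0.bypass w0.bypass_isPath
  have h2 := w0.bypass_isPath.length_lt
  omega

lemma descend_nochild [Fintype V] (hT : G.IsTree) (v : V) :
    ¬∃ u, u ∈ s ∧ G.Adj (descend G r s (Fintype.card V) v) u ∧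
      G.dist r u = G.dist r (descend G r s (Fintype.card V) v) + 1 := by
  intro h
  have := descend_dist_ge (G := G) (r := r) (s := s) (Fintype.card V) v h
  have := dist_lt_card hT r (descend G r s (Fintype.card V) v)
  omega

/-- Descending from a vertex of a subtree ends at a leaf of the subtree. -/
lemma descend_leaf [Fintype V] (hT : G.IsTree)
    (hsC : (G.induce (s : Set V)).Connected)
    {rt : V} (hrtm : rt ∈ s) (hmin : ∀ v ∈ s, G.dist r rt ≤ G.dist r v)
    (pos : V → ℕ)
    (hpost : ∀ u v : V, IsAnc G r v u → pos u ≤ pos v)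
    (hcontig : ∀ u x v : V, IsAnc G r v u → pos u ≤ pos x → pos x ≤ pos v → IsAnc G r v x)
    (hnontriv : ∃ z ∈ s, z ≠ rt)
    {v : V} (hv : v ∈ s) :
    descend G r s (Fintype.card V) v ∈ s ∧ descend G r s (Fintype.card V) v ≠ rt ∧
      (s.filter fun u => G.Adj (descend G r s (Fintype.card V) v) u).card ≤ 1 := by
  classical
  set w := descend G r s (Fintype.card V) v with hwdef
  have hwmem : w ∈ s := descend_mem _ _ hv
  have hnoch := descend_nochild (hT := hT) (r := r) (s := s) v
  rw [← hwdef] at hnoch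
  -- every neighbour of w in s is its parent
  have hpar : ∀ u ∈ s, G.Adj w u → IsAnc G r u w ∧ G.dist r w = G.dist r u + 1 := by
    intro u hus hadj
    rcases adj_updown hT r hadj with ⟨h1, h2⟩ | h
    · exact absurd ⟨u, hus, hadj, h2⟩ hnoch
    · exact h
  have hcard : (s.filter fun u => G.Adj w u).card ≤ 1 := by
    rw [Finset.card_le_one]
    intro a ha b hb
    rw [Finset.mem_filter] at ha hb
    obtain ⟨ha1, ha2⟩ := hpar a ha.1 ha.2
    obtain ⟨hb1, hb2⟩ := hpar b hb.1 hb.2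
    exact anc_eq_of_dist_eq hT.isConnected pos hpost hcontig ha1 hb1 (by omega)
  have hwne : w ≠ rt := by
    intro hwrt
    -- then s = {rt}, contradicting the existence of a leaf
    have hsingle : ∀ x ∈ s, x = rt := by
      intro x hx
      obtain ⟨w0⟩ := hsC ⟨rt, hrtm⟩ ⟨x, hx⟩
      cases w0 with
      | nil => rfl
      | cons hadj w' =>
        rename_i b
        exfalso
        have hadj' : G.Adj rt b.1 := hadj
        have hb : b.1 ∈ s := b.2
        rcases adj_updown hT r hadj' with ⟨h1, h2⟩ | ⟨h1, h2⟩
        · exact hnoch ⟨b.1, hb, by rw [hwrt]; exact hadj', by rw [hwrt]; omega⟩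
        · have := hmin b.1 hb
          omega
    obtain ⟨z, hz, hzne⟩ := hnontriv
    exact hzne (hsingle z hz)
  exact ⟨hwmem, hwne, hcard⟩

/-- Selection from a chain of finsets. -/
lemma chain_select {U : Type} [DecidableEq U] (a : ℕ) :
    ∀ (Qs : Finset (Finset U)), ∀ (B : Finset U),
    (∀ Q ∈ Qs, ∀ Q' ∈ Qs, Q ⊆ Q' ∨ Q' ⊆ Q) →
    (∀ Q ∈ Qs, B ⊆ Q) → B.card ≤ a →
    ∃ R : Finset U, B ⊆ R ∧ R ⊆ B ∪ Qs.sup id ∧ R.card ≤ a ∧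
      ∀ Q ∈ Qs, min a Q.card ≤ (R ∩ Q).card := by
  intro Qs
  induction Qs using Finset.strongInduction with
  | _ Qs ih =>
    intro B hchain hB hBa
    rcases Finset.eq_empty_or_nonempty Qs with rfl | hne
    · exact ⟨B, Finset.Subset.refl B, Finset.subset_union_left, hBa, by simp⟩
    · obtain ⟨Qm, hQm, hQmax⟩ := Finset.exists_max_image Qs Finset.card hne
      have hQmsup : ∀ Q ∈ Qs, Q ⊆ Qm := by
        intro Q hQ
        rcases hchain Q hQ Qm hQm with h | h
        · exact h
        · rw [Finset.eq_of_subset_of_card_le h (hQmax Q hQ)]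
      have hsub : Qs.erase Qm ⊂ Qs := Finset.erase_ssubset hQm
      obtain ⟨R', hR'B, hR'sub, hR'a, hR'cov⟩ := ih (Qs.erase Qm) hsub B
        (fun Q hQ Q' hQ' => hchain Q (Finset.mem_of_mem_erase hQ) Q' (Finset.mem_of_mem_erase hQ'))
        (fun Q hQ => hB Q (Finset.mem_of_mem_erase hQ)) hBa
      have hR'Qm : R' ⊆ Qm := by
        intro x hx
        rcases Finset.mem_union.mp (hR'sub hx) with h | h
        · exact hB Qm hQm h
        · rw [Finset.mem_sup] at h
          obtain ⟨Q, hQ, hxQ⟩ := h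
          exact hQmsup Q (Finset.mem_of_mem_erase hQ) hxQ
      have hfresh : min a Qm.card - R'.card ≤ (Qm \ R').card := by
        rw [Finset.card_sdiff_of_subset hR'Qm]
        have : min a Qm.card ≤ Qm.card := min_le_right _ _
        omega
      obtain ⟨t, ht, htcard⟩ := Finset.exists_subset_card_eq hfresh
      refine ⟨R' ∪ t, ?_, ?_, ?_, ?_⟩
      · exact hR'B.trans Finset.subset_union_left
      · intro x hx
        rcases Finset.mem_union.mp hx with h | h
        · rcases Finset.mem_union.mp (hR'sub h) with h' | h'
          · exact Finset.mem_union_left _ h'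
          · apply Finset.mem_union_right
            rw [Finset.mem_sup] at h' ⊢
            obtain ⟨Q, hQ, hxQ⟩ := h'
            exact ⟨Q, Finset.mem_of_mem_erase hQ, hxQ⟩
        · apply Finset.mem_union_right
          rw [Finset.mem_sup]
          exact ⟨Qm, hQm, (Finset.mem_sdiff.mp (ht h)).1⟩
      · have hdisj : Disjoint R' t := by
          rw [Finset.disjoint_right]
          intro x hxt hxR
          exact (Finset.mem_sdiff.mp (ht hxt)).2 hxR
        rw [Finset.card_union_of_disjoint hdisj, htcard]
        have : min a Qm.card ≤ a := min_le_left _ _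
        omega
      · intro Q hQ
        by_cases hQQm : Q = Qm
        · subst hQQm
          have htQ : t ⊆ Q := ht.trans Finset.sdiff_subset
          have hsubQ : R' ∪ t ⊆ Q := Finset.union_subset hR'Qm htQ
          have hdisj : Disjoint R' t := by
            rw [Finset.disjoint_right]
            intro x hxt hxR
            exact (Finset.mem_sdiff.mp (ht hxt)).2 hxR
          rw [Finset.inter_eq_left.mpr hsubQ, Finset.card_union_of_disjoint hdisj, htcard]
          omega
        · have hQe : Q ∈ Qs.erase Qm := Finset.mem_erase.mpr ⟨hQQm, hQ⟩
          calc min a Q.card ≤ (R' ∩ Q).card := hR'cov Q hQe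
            _ ≤ ((R' ∪ t) ∩ Q).card :=
              Finset.card_le_card (Finset.inter_subset_inter Finset.subset_union_left
                (Finset.Subset.refl Q))

end MGAux3

namespace MGGreedy

variable {V : Type} [Fintype V] [DecidableEq V] {n : ℕ}
  (G : SimpleGraph V) (S : Fin n → Finset V) (k : Object V → ℕ) (d : Fin n → ℕ)

/-- The candidate value computed by the greedy algorithm at step `t`. -/
noncomputable def gcval (t : ℕ) (h : t < n) : ℕ :=
  if hne : (univ.filter fun o => ContainsObj G (S (⟨t, h⟩ : Fin n)) o).Nonempty then
    (univ.filter fun o => ContainsObj G (S (⟨t, h⟩ : Fin n)) o).inf' hne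
      fun o => k o - mload G S (greedyM G S k d t) o
  else 0

lemma greedy_succ {t : ℕ} (h : t < n) :
    greedyM G S k d (t + 1) = Function.update (greedyM G S k d t) ⟨t, h⟩
      (min (d ⟨t, h⟩) (gcval G S k d t h)) := by
  simp only [greedyM, dif_pos h, gcval]

lemma greedy_succ_stop {t : ℕ} (h : ¬ t < n) :
    greedyM G S k d (t + 1) = greedyM G S k d t := by
  simp only [greedyM, dif_neg h]

lemma greedy_zero_of_le {t : ℕ} {i : Fin n} (h : t ≤ i.val) : greedyM G S k d t i = 0 := by
  induction t with
  | zero => rfl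
  | succ t ih =>
    have ht : t < n := lt_of_le_of_lt (Nat.le_of_succ_le h) i.isLt
    rw [greedy_succ G S k d ht]
    rw [Function.update_of_ne (by
      intro he
      have := congrArg Fin.val he
      simp at this
      omega)]
    exact ih (by omega)

lemma greedy_stable {t t' : ℕ} {i : Fin n} (h : i.val < t) (h' : t ≤ t') :
    greedyM G S k d t' i = greedyM G S k d t i := by
  induction t' with
  | zero => omega
  | succ t' ih =>
    rcases Nat.lt_or_ge t (t' + 1) with hlt | hge
    · have htt : t ≤ t' := by omega
      by_cases ht' : t' < n
      · rw [greedy_succ G S k d ht']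
        rw [Function.update_of_ne (by intro he; rw [he] at h; simp at h; omega)]
        exact ih htt
      · rw [greedy_succ_stop G S k d ht']
        exact ih htt
    · have : t = t' + 1 := by omega
      rw [this]

lemma greedy_val {i : Fin n} :
    greedyM G S k d n i = min (d i) (gcval G S k d i.val i.isLt) := by
  have h1 : greedyM G S k d n i = greedyM G S k d (i.val + 1) i :=
    greedy_stable G S k d (Nat.lt_succ_self _) i.isLt
  rw [h1, greedy_succ G S k d i.isLt]
  have : (⟨i.val, i.isLt⟩ : Fin n) = i := rfl
  rw [this, Function.update_self]

lemma greedy_le_d (i : Fin n) : greedyM G S k d n i ≤ d i := by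
  rw [greedy_val]; exact min_le_left _ _

lemma mload_update {m : Fin n → ℕ} {i : Fin n} (hmi : m i = 0) (a : ℕ) (o : Object V) :
    mload G S (Function.update m i a) o =
      mload G S m o + (if ContainsObj G (S i) o then a else 0) := by
  unfold mload
  by_cases hc : ContainsObj G (S i) o
  · rw [if_pos hc]
    have hi : i ∈ univ.filter (fun j => ContainsObj G (S j) o) := by
      rw [Finset.mem_filter]; exact ⟨Finset.mem_univ i, hc⟩
    rw [Finset.sum_update_of_mem hi]
    rw [← Finset.sum_erase_add _ _ hi, Finset.sdiff_singleton_eq_erase]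
    rw [hmi]
    omega
  · rw [if_neg hc, add_zero]
    apply Finset.sum_congr rfl
    intro j hj
    rw [Finset.mem_filter] at hj
    have : j ≠ i := by intro he; rw [he] at hj; exact hc hj.2
    rw [Function.update_of_ne this]

lemma mload_succ {t : ℕ} (h : t < n) (o : Object V) :
    mload G S (greedyM G S k d (t + 1)) o = mload G S (greedyM G S k d t) o +
      (if ContainsObj G (S (⟨t, h⟩ : Fin n)) o
        then min (d ⟨t, h⟩) (gcval G S k d t h) else 0) := by
  rw [greedy_succ G S k d h]
  exact mload_update G S (greedy_zero_of_le G S k d (le_refl t)) _ o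

lemma mload_mono {t t' : ℕ} (h : t ≤ t') (o : Object V) :
    mload G S (greedyM G S k d t) o ≤ mload G S (greedyM G S k d t') o := by
  induction t' with
  | zero => have : t = 0 := by omega
            rw [this]
  | succ t' ih =>
    rcases Nat.lt_or_ge t (t' + 1) with hlt | hge
    · have h1 := ih (by omega)
      by_cases ht' : t' < n
      · rw [mload_succ G S k d ht']
        omega
      · rw [greedy_succ_stop G S k d ht']
        exact h1
    · have : t = t' + 1 := by omega
      rw [this]

lemma mload_le_k (t : ℕ) (o : Object V) : mload G S (greedyM G S k d t) o ≤ k o := by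
  induction t with
  | zero =>
    unfold mload greedyM
    simp
  | succ t ih =>
    by_cases ht : t < n
    · rw [mload_succ G S k d ht]
      by_cases hc : ContainsObj G (S (⟨t, ht⟩ : Fin n)) o
      · rw [if_pos hc]
        have hne : (univ.filter fun o' => ContainsObj G (S (⟨t, ht⟩ : Fin n)) o').Nonempty :=
          ⟨o, by rw [Finset.mem_filter]; exact ⟨Finset.mem_univ o, hc⟩⟩
        have hgc : gcval G S k d t ht ≤ k o - mload G S (greedyM G S k d t) o := by
          unfold gcval
          rw [dif_pos hne]
          exact Finset.inf'_le _ (by rw [Finset.mem_filter]; exact ⟨Finset.mem_univ o, hc⟩)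
        have := min_le_right (d (⟨t, ht⟩ : Fin n)) (gcval G S k d t ht)
        omega
      · rw [if_neg hc, add_zero]; exact ih
    · rw [greedy_succ_stop G S k d ht]; exact ih

lemma gcval_le {t : ℕ} (h : t < n) {o : Object V} (hc : ContainsObj G (S (⟨t, h⟩ : Fin n)) o) :
    gcval G S k d t h ≤ k o - mload G S (greedyM G S k d t) o := by
  have hne : (univ.filter fun o' => ContainsObj G (S (⟨t, h⟩ : Fin n)) o').Nonempty :=
    ⟨o, by rw [Finset.mem_filter]; exact ⟨Finset.mem_univ o, hc⟩⟩
  unfold gcval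
  rw [dif_pos hne]
  exact Finset.inf'_le _ (by rw [Finset.mem_filter]; exact ⟨Finset.mem_univ o, hc⟩)

/-- If the greedy does not fully serve `i`, some object of `T i` is saturated from
step `i.val + 1` on. -/
lemma greedy_sat {i : Fin n} (hSne : (S i).Nonempty)
    (hlt : greedyM G S k d n i < d i) :
    ∃ o, ContainsObj G (S i) o ∧
      ∀ t, i.val + 1 ≤ t → mload G S (greedyM G S k d t) o = k o := by
  have hval := greedy_val G S k d (i := i)
  have hne : (univ.filter fun o => ContainsObj G (S i) o).Nonempty := by
    obtain ⟨v, hv⟩ := hSne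
    exact ⟨Sum.inl v, by rw [Finset.mem_filter]; exact ⟨Finset.mem_univ _, hv⟩⟩
  have hgc : gcval G S k d i.val i.isLt =
      (univ.filter fun o => ContainsObj G (S i) o).inf' hne
        (fun o => k o - mload G S (greedyM G S k d i.val) o) := by
    unfold gcval
    rw [dif_pos]
  obtain ⟨o, ho, hoeq⟩ := Finset.exists_mem_eq_inf' hne
    (fun o => k o - mload G S (greedyM G S k d i.val) o)
  rw [Finset.mem_filter] at ho
  have hA : greedyM G S k d n i = gcval G S k d i.val i.isLt := by
    rw [hval] at hlt ⊢
    omega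
  refine ⟨o, ho.2, ?_⟩
  have hsat : mload G S (greedyM G S k d (i.val + 1)) o = k o := by
    rw [mload_succ G S k d i.isLt, if_pos ho.2]
    have hko : gcval G S k d i.val i.isLt =
        k o - mload G S (greedyM G S k d i.val) o := hgc.trans hoeq
    have h1 : min (d i) (gcval G S k d i.val i.isLt) =
        k o - mload G S (greedyM G S k d i.val) o := by
      rw [← hko]
      rcases le_total (d i) (gcval G S k d i.val i.isLt) with hle | hle
      · rw [min_eq_left hle] at hval ⊢
        omega
      · rw [min_eq_right hle]
    have h2 := mload_le_k G S k d i.val o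
    have : (⟨i.val, i.isLt⟩ : Fin n) = i := rfl
    rw [this, h1]
    omega
  intro t ht
  have h1 := mload_mono G S k d ht o
  have h2 := mload_le_k G S k d t o
  omega

end MGGreedy

section MainClaim

open MGAux MGAux2 MGAux3 MGGreedy

variable {V : Type} [Fintype V] [DecidableEq V]

/-- All multiplicities below the current greedy stage must vanish for a residually
feasible multiset. -/
lemma mzero {n : ℕ} (G : SimpleGraph V) (S : Fin n → Finset V) (k : Object V → ℕ)
    (d : Fin n → ℕ) (hSne : ∀ i, (S i).Nonempty) (t : ℕ) (m : Fin n → ℕ)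
    (hm2 : ∀ j : Fin n, j.val < t → m j ≤ d j - greedyM G S k d n j)
    (hres : ∀ o, mload G S m o + mload G S (greedyM G S k d t) o ≤ k o) :
    ∀ j : Fin n, j.val < t → m j = 0 := by
  intro j hj
  rcases Nat.lt_or_ge (greedyM G S k d n j) (d j) with hlt | hge
  · obtain ⟨o, ho, hsat⟩ := greedy_sat G S k d (hSne j) hlt
    have hsat' : mload G S (greedyM G S k d t) o = k o := hsat t (by omega)
    have h0 : mload G S m o = 0 := by
      have := hres o
      omega
    have hle : m j ≤ mload G S m o := by
      unfold mload
      exact Finset.single_le_sum (fun _ _ => Nat.zero_le _)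
        (by rw [Finset.mem_filter]; exact ⟨Finset.mem_univ j, ho⟩)
    omega
  · have := greedy_le_d G S k d j
    have := hm2 j hj
    omega

lemma main_claim {n : ℕ} (G : SimpleGraph V) (hTree : G.IsTree) (r : V)
    (S : Fin n → Finset V)
    (hsub : ∀ i, (G.induce (S i : Set V)).Connected)
    (rt : Fin n → V) (hrtmem : ∀ i, rt i ∈ S i)
    (hrtmin : ∀ i, ∀ v ∈ S i, G.dist r (rt i) ≤ G.dist r v)
    (pos : V → ℕ) (hposinj : Function.Injective pos)
    (hpost : ∀ u v : V, IsAnc G r v u → pos u ≤ pos v)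
    (hcontig : ∀ u x v : V, IsAnc G r v u → pos u ≤ pos x → pos x ≤ pos v → IsAnc G r v x)
    (hord : ∀ i j : Fin n, i ≤ j → pos (rt i) ≤ pos (rt j))
    (k : Object V → ℕ) (d : Fin n → ℕ)
    (M : ℕ) (hM1 : ∀ i, 1 ≤ leavesCnt G (S i) (rt i))
    (hM : ∀ i, leavesCnt G (S i) (rt i) ≤ M) :
    ∀ steps t, t + steps = n → ∀ m : Fin n → ℕ,
    (∀ j, m j ≤ d j) →
    (∀ j : Fin n, j.val < t → m j ≤ d j - greedyM G S k d n j) →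
    (∀ o, mload G S m o + mload G S (greedyM G S k d t) o ≤ k o) →
    ∑ j, m j ≤ M * ∑ j ∈ univ.filter (fun j => t ≤ j.val), greedyM G S k d n j := by
  have hSne : ∀ i, (S i).Nonempty := by
    intro i
    have h1 : 0 < leavesCnt G (S i) (rt i) := hM1 i
    unfold leavesCnt at h1
    obtain ⟨z, hz⟩ := Finset.card_pos.mp h1
    exact ⟨z, (Finset.mem_filter.mp hz).1⟩
  intro steps
  induction steps with
  | zero =>
    intro t ht m hm1 hm2 hres
    have hz : ∀ j : Fin n, m j = 0 := fun j =>
      mzero G S k d hSne t m hm2 hres j (by omega)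
    rw [Finset.sum_eq_zero (fun j _ => hz j)]
    exact Nat.zero_le _
  | succ steps ih =>
    intro t ht m hm1 hm2 hres
    have h : t < n := by omega
    set i : Fin n := ⟨t, h⟩ with hidef
    have hival : i.val = t := rfl
    set A : Fin n → ℕ := greedyM G S k d n with hAdef
    have hm0 : ∀ j : Fin n, j.val < t → m j = 0 :=
      mzero G S k d hSne t m hm2 hres
    -- the object/unit machinery
    set Oi : Finset (Object V) := univ.filter (fun o => ContainsObj G (S i) o) with hOidef
    set Q : Object V → Finset (Fin n × ℕ) :=
      (fun o => (univ.filter (fun j => ContainsObj G (S j) o)).biUnion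
        (fun j => {j} ×ˢ Finset.range (m j))) with hQdef
    set lam : Object V → V :=
      (fun o => descend G r (S i) (Fintype.card V) ((vpair G r o).2)) with hlamdef
    set Lf : Finset V :=
      (S i).filter (fun v => v ≠ rt i ∧ ((S i).filter fun u => G.Adj v u).card ≤ 1) with hLfdef
    set B : Finset (Fin n × ℕ) := {i} ×ˢ Finset.range (min (m i) (A i)) with hBdef
    have hQcard : ∀ o, (Q o).card = mload G S m o := by
      intro o
      rw [hQdef]
      rw [Finset.card_biUnion]
      · unfold mload
        apply Finset.sum_congr rfl
        intro j _
        rw [Finset.card_product]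
        simp
      · intro x _ y _ hxy
        simp only [Function.onFun]
        rw [Finset.disjoint_left]
        intro u hux huy
        rw [Finset.mem_product, Finset.mem_singleton] at hux huy
        exact hxy (hux.1.symm.trans huy.1)
    have hBQ : ∀ o ∈ Oi, B ⊆ Q o := by
      intro o ho
      rw [hOidef, Finset.mem_filter] at ho
      intro u hu
      rw [hBdef, Finset.mem_product, Finset.mem_singleton, Finset.mem_range] at hu
      rw [hQdef, Finset.mem_biUnion]
      refine ⟨i, by rw [Finset.mem_filter]; exact ⟨Finset.mem_univ _, ho.2⟩, ?_⟩
      rw [Finset.mem_product, Finset.mem_singleton, Finset.mem_range]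
      exact ⟨hu.1, lt_of_lt_of_le hu.2 (min_le_left _ _)⟩
    have hBcard : B.card = min (m i) (A i) := by
      rw [hBdef, Finset.card_product]
      simp
    -- monotonicity of Q along the ancestor order
    have hQmono : ∀ o1 o2 : Object V, ContainsObj G (S i) o1 → ContainsObj G (S i) o2 →
        IsAnc G r (vpair G r o1).2 (vpair G r o2).1 → Q o2 ⊆ Q o1 := by
      intro o1 o2 hc1 hc2 hanc
      intro u hu
      rw [hQdef, Finset.mem_biUnion] at hu ⊢
      obtain ⟨j, hj, hu2⟩ := hu
      rw [Finset.mem_filter] at hj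
      rw [Finset.mem_product, Finset.mem_singleton, Finset.mem_range] at hu2
      have hmj : 0 < m j := by
        rcases hu2 with ⟨rfl, h2⟩
        omega
      have hij : i ≤ j := by
        by_contra hcon
        have : j.val < t := by
          simp only [not_le] at hcon
          exact hcon
        have := hm0 j this
        omega
      -- the root of `S j` is an ancestor of the root of `S i`
      have hv2i := vpair_mem (r := r) hTree hc2
      have hv2j := vpair_mem (r := r) hTree hj.2
      have hrtianc : ∀ x ∈ S i, IsAnc G r (rt i) x := fun x hx =>
        root_anc hTree (hsub i) (hrtmem i) (hrtmin i) pos hpost hcontig hx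
      have hrtjanc : ∀ x ∈ S j, IsAnc G r (rt j) x := fun x hx =>
        root_anc hTree (hsub j) (hrtmem j) (hrtmin j) pos hpost hcontig hx
      have hroots : IsAnc G r (rt j) (rt i) := by
        rcases anc_total pos hpost hcontig (hrtianc _ hv2i.2) (hrtjanc _ hv2j.2) with hc | hc
        · have h1 := hpost _ _ hc
          have h2 := hord i j hij
          have : rt i = rt j := hposinj (le_antisymm h2 h1)
          rw [this]
          exact anc_refl _
        · exact hc
      have hco1j : ContainsObj G (S j) o1 := by
        apply obj_mem (r := r) hTree (hsub j) (ovalid_of_contains hc1) (hrtmem j) hv2j.2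
        · exact anc_trans (r := r) hTree.isConnected hroots
            (hrtianc _ (vpair_mem (r := r) hTree hc1).1)
        · exact anc_trans (r := r) hTree.isConnected hanc
            (vpair_anc (r := r) hTree (ovalid_of_contains hc2))
      exact ⟨j, by rw [Finset.mem_filter]; exact ⟨Finset.mem_univ _, hco1j⟩, by
        rw [Finset.mem_product, Finset.mem_singleton, Finset.mem_range]
        exact hu2⟩
    -- per-leaf selection
    have hRex : ∀ ℓ : V, ∃ R : Finset (Fin n × ℕ),
        B ⊆ R ∧ R ⊆ B ∪ ((Oi.filter (fun o => lam o = ℓ)).image Q).sup id ∧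
        R.card ≤ A i ∧
        ∀ Q' ∈ (Oi.filter (fun o => lam o = ℓ)).image Q, min (A i) Q'.card ≤ (R ∩ Q').card := by
      intro ℓ
      apply chain_select (A i) ((Oi.filter (fun o => lam o = ℓ)).image Q) B
      · intro Q1 hQ1 Q2 hQ2
        obtain ⟨o1, ho1, rfl⟩ := Finset.mem_image.mp hQ1
        obtain ⟨o2, ho2, rfl⟩ := Finset.mem_image.mp hQ2
        rw [Finset.mem_filter] at ho1 ho2
        obtain ⟨ho1m, ho1l⟩ := ho1
        obtain ⟨ho2m, ho2l⟩ := ho2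
        rw [hOidef, Finset.mem_filter] at ho1m ho2m
        have hanc1 : IsAnc G r (vpair G r o1).2 (lam o1) := by
          rw [hlamdef]
          exact descend_anc hTree _ _
        have hanc2 : IsAnc G r (vpair G r o2).2 (lam o2) := by
          rw [hlamdef]
          exact descend_anc hTree _ _
        rw [ho1l] at hanc1
        rw [ho2l] at hanc2
        rcases comparable_of_common hTree pos hpost hcontig
          (ovalid_of_contains ho1m.2) (ovalid_of_contains ho2m.2) hanc1 hanc2 with hcc | hcc | hcc
        · exact Or.inr (hQmono o1 o2 ho1m.2 ho2m.2 hcc)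
        · exact Or.inl (hQmono o2 o1 ho2m.2 ho1m.2 hcc)
        · rw [hcc]
          exact Or.inl (Finset.Subset.refl _)
      · intro Q' hQ'
        obtain ⟨o, ho, rfl⟩ := Finset.mem_image.mp hQ'
        rw [Finset.mem_filter] at ho
        exact hBQ o ho.1
      · rw [hBcard]
        exact min_le_right _ _
    choose R hRB hRsub hRcard hRcov using hRex
    set Rtot : Finset (Fin n × ℕ) := Lf.biUnion R with hRtotdef
    set rfun : Fin n → ℕ := fun j => (Rtot.filter (fun u => u.1 = j)).card with hrfundef
    set m' : Fin n → ℕ := fun j => m j - rfun j with hm'def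
    have hLfcard : Lf.card = leavesCnt G (S i) (rt i) := rfl
    have hRtotcard : Rtot.card ≤ M * A i := by
      calc Rtot.card ≤ ∑ ℓ ∈ Lf, (R ℓ).card := Finset.card_biUnion_le
        _ ≤ ∑ _ℓ ∈ Lf, A i := Finset.sum_le_sum (fun ℓ _ => hRcard ℓ)
        _ = Lf.card * A i := by rw [Finset.sum_const, smul_eq_mul]
        _ ≤ M * A i := by
            apply Nat.mul_le_mul_right
            rw [hLfcard]
            exact hM i
    have hsumr : ∑ j, rfun j = Rtot.card := by
      rw [hrfundef]
      exact (Finset.card_eq_sum_card_fiberwise (fun u _ => Finset.mem_univ u.1)).symm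
    have hsum : ∑ j, m j ≤ ∑ j, m' j + Rtot.card := by
      rw [← hsumr, ← Finset.sum_add_distrib]
      apply Finset.sum_le_sum
      intro j _
      simp only [hm'def]
      omega
    -- hypotheses for the inductive step
    have hm'le : ∀ j, m' j ≤ d j := by
      intro j
      simp only [hm'def]
      have := hm1 j
      omega
    have hLfne : Lf.Nonempty := by
      apply Finset.card_pos.mp
      rw [hLfcard]
      exact lt_of_lt_of_le Nat.zero_lt_one (hM1 i)
    have hrfi : min (m i) (A i) ≤ rfun i := by
      obtain ⟨ℓ0, hℓ0⟩ := hLfne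
      have hBR : B ⊆ Rtot.filter (fun u => u.1 = i) := by
        intro u hu
        have hu' : u ∈ R ℓ0 := hRB ℓ0 hu
        rw [Finset.mem_filter]
        constructor
        · rw [hRtotdef]
          exact Finset.mem_biUnion.mpr ⟨ℓ0, hℓ0, hu'⟩
        · rw [hBdef, Finset.mem_product, Finset.mem_singleton] at hu
          exact hu.1
      calc min (m i) (A i) = B.card := hBcard.symm
        _ ≤ _ := Finset.card_le_card hBR
    have hm'lt : ∀ j : Fin n, j.val < t + 1 → m' j ≤ d j - A j := by
      intro j hj
      rcases Nat.lt_or_ge j.val t with hjt | hjt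
      · simp only [hm'def]
        have := hm0 j hjt
        omega
      · have hji : j = i := by
          apply Fin.ext
          omega
        have h1 := hm1 i
        have h2 : A i ≤ d i := by rw [hAdef]; exact greedy_le_d G S k d i
        have h3 := hrfi
        subst hji
        simp only [hm'def]
        omega
    have hAislack : ∀ o, ContainsObj G (S i) o →
        A i + mload G S (greedyM G S k d t) o ≤ k o := by
      intro o hc
      have h1 : A i ≤ gcval G S k d t h := by
        rw [hAdef]
        have := greedy_val G S k d (i := i)
        rw [this]
        exact min_le_right _ _
      have h2 := gcval_le G S k d h (o := o) hc
      have h3 := mload_le_k G S k d t o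
      omega
    have hm'res : ∀ o, mload G S m' o + mload G S (greedyM G S k d (t + 1)) o ≤ k o := by
      intro o
      have hsucc := mload_succ G S k d h o
      by_cases hc : ContainsObj G (S i) o
      · rw [hsucc, if_pos hc]
        have hAieq : min (d (⟨t, h⟩ : Fin n)) (gcval G S k d t h) = A i := by
          rw [hAdef]
          exact (greedy_val G S k d (i := i)).symm
        rw [hAieq]
        set x := (Rtot ∩ Q o).card with hxdef
        set y : Fin n → ℕ := fun j => ((Rtot ∩ Q o).filter (fun u => u.1 = j)).card with hydef
        have hxy : x = ∑ j, y j := by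
          rw [hxdef, hydef]
          exact Finset.card_eq_sum_card_fiberwise (fun u _ => Finset.mem_univ u.1)
        have hyr : ∀ j, y j ≤ rfun j := by
          intro j
          apply Finset.card_le_card
          intro u hu
          rw [Finset.mem_filter] at hu ⊢
          exact ⟨Finset.mem_inter.mp hu.1 |>.1, hu.2⟩
        have hym : ∀ j, y j ≤ m j := by
          intro j
          have hsub' : (Rtot ∩ Q o).filter (fun u => u.1 = j) ⊆ {j} ×ˢ Finset.range (m j) := by
            intro u hu
            rw [Finset.mem_filter] at hu
            have huQ : u ∈ Q o := (Finset.mem_inter.mp hu.1).2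
            rw [hQdef, Finset.mem_biUnion] at huQ
            obtain ⟨j', _, hu2⟩ := huQ
            rw [Finset.mem_product, Finset.mem_singleton] at hu2 ⊢
            have : j' = j := by rw [← hu2.1, hu.2]
            rw [← this]
            exact hu2
          calc y j ≤ ({j} ×ˢ Finset.range (m j)).card := Finset.card_le_card hsub'
            _ = m j := by rw [Finset.card_product]; simp
        have hy0 : ∀ j, ¬ContainsObj G (S j) o → y j = 0 := by
          intro j hnc
          rw [hydef]
          simp only []
          rw [Finset.card_eq_zero]
          apply Finset.filter_eq_empty_iff.mpr
          intro u hu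
          have huQ : u ∈ Q o := (Finset.mem_inter.mp hu).2
          rw [hQdef, Finset.mem_biUnion] at huQ
          obtain ⟨j', hj', hu2⟩ := huQ
          rw [Finset.mem_filter] at hj'
          rw [Finset.mem_product, Finset.mem_singleton] at hu2
          intro hfst
          rw [hu2.1] at hfst
          rw [hfst] at hj'
          exact hnc hj'.2
        have claim1 : mload G S m' o + x ≤ mload G S m o := by
          rw [hxy]
          have hysplit : ∑ j, y j = ∑ j ∈ univ.filter (fun j => ContainsObj G (S j) o), y j := by
            rw [← Finset.sum_filter_add_sum_filter_not univ (fun j => ContainsObj G (S j) o)]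
            have : ∑ j ∈ univ.filter (fun j => ¬ContainsObj G (S j) o), y j = 0 :=
              Finset.sum_eq_zero (fun j hj => hy0 j (Finset.mem_filter.mp hj).2)
            omega
          unfold mload
          rw [hysplit, ← Finset.sum_add_distrib]
          apply Finset.sum_le_sum
          intro j _
          have := hyr j
          have := hym j
          simp only [hm'def]
          omega
        have claim2 : min (A i) (mload G S m o) ≤ x := by
          set ℓ := lam o with hldef
          have hoOi : o ∈ Oi := by
            rw [hOidef, Finset.mem_filter]
            exact ⟨Finset.mem_univ _, hc⟩
          have hlLf : ℓ ∈ Lf := by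
            have hnt : ∃ z ∈ S i, z ≠ rt i := by
              have h1 : 0 < leavesCnt G (S i) (rt i) := hM1 i
              unfold leavesCnt at h1
              obtain ⟨z, hz⟩ := Finset.card_pos.mp h1
              rw [Finset.mem_filter] at hz
              exact ⟨z, hz.1, hz.2.1⟩
            have hdl := descend_leaf hTree (hsub i) (hrtmem i) (hrtmin i) pos hpost hcontig
              hnt (vpair_mem (r := r) hTree hc).2
            rw [hldef, hlamdef, hLfdef, Finset.mem_filter]
            exact ⟨hdl.1, hdl.2.1, hdl.2.2⟩
          have hQmem : Q o ∈ (Oi.filter (fun o' => lam o' = ℓ)).image Q :=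
            Finset.mem_image.mpr ⟨o, Finset.mem_filter.mpr ⟨hoOi, rfl⟩, rfl⟩
          have h1 := hRcov ℓ (Q o) hQmem
          have h2 : (R ℓ ∩ Q o).card ≤ x := by
            rw [hxdef]
            apply Finset.card_le_card
            apply Finset.inter_subset_inter _ (Finset.Subset.refl _)
            rw [hRtotdef]
            exact Finset.subset_biUnion_of_mem R hlLf
          rw [hQcard o] at h1
          omega
        have h3 := hres o
        have h4 := hAislack o hc
        omega
      · rw [hsucc, if_neg hc, add_zero]
        have h1 : mload G S m' o ≤ mload G S m o := by
          unfold mload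
          apply Finset.sum_le_sum
          intro j _
          simp only [hm'def]
          omega
        have := hres o
        omega
    have hIH := ih (t + 1) (by omega) m' hm'le hm'lt hm'res
    -- combine
    have hsplit : univ.filter (fun j : Fin n => t ≤ j.val) =
        insert i (univ.filter (fun j : Fin n => t + 1 ≤ j.val)) := by
      ext j
      simp only [Finset.mem_filter, Finset.mem_insert, Finset.mem_univ, true_and]
      constructor
      · intro hj
        rcases Nat.eq_or_lt_of_le hj with he | hlt
        · left
          apply Fin.ext
          omega
        · right
          omega
      · intro hj
        rcases hj with rfl | hj
        · rfl
        · omega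
    have hnotmem : i ∉ univ.filter (fun j : Fin n => t + 1 ≤ j.val) := by
      rw [Finset.mem_filter]
      push_neg
      intro
      omega
    rw [hsplit, Finset.sum_insert hnotmem, Nat.mul_add]
    calc ∑ j, m j ≤ ∑ j, m' j + Rtot.card := hsum
      _ ≤ M * ∑ j ∈ univ.filter (fun j : Fin n => t + 1 ≤ j.val), greedyM G S k d n j
          + M * A i := Nat.add_le_add hIH hRtotcard
      _ = M * A i + M * ∑ j ∈ univ.filter (fun j : Fin n => t + 1 ≤ j.val),
            greedyM G S k d n j := by omega
    
end MainClaim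


/-- **Theorem (M-approximation for the demand version).** The multiset `A` output by
the modified greedy algorithm is feasible, and every feasible multiset `m` satisfies
`|m| ≤ M · |A|`, cardinalities being counted with multiplicities. -/
theorem statement10
    {V : Type} [Fintype V] [DecidableEq V] (G : SimpleGraph V)
    (hTree : G.IsTree) (r : V)
    {n : ℕ} (S : Fin n → Finset V)
    -- the subtrees are distinct, and each `S i` is a connected subgraph of `G`
    (hdistinct : Function.Injective S)
    (hsub : ∀ i, (G.induce (S i : Set V)).Connected)
    -- `rt i` is the vertex of the subtree `S i` closest to the root `r`
    (rt : Fin n → V) (hrtmem : ∀ i, rt i ∈ S i)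
    (hrtmin : ∀ i, ∀ v ∈ S i, G.dist r (rt i) ≤ G.dist r v)
    -- `pos` is a post-order (bottom-up) traversal of the tree ...
    (pos : V → ℕ) (hposinj : Function.Injective pos)
    (hpost : ∀ u v : V, IsAnc G r v u → pos u ≤ pos v)
    (hcontig : ∀ u x v : V, IsAnc G r v u → pos u ≤ pos x → pos x ≤ pos v → IsAnc G r v x)
    -- ... along which the roots of the subtrees appear in nondecreasing order
    (hord : ∀ i j : Fin n, i ≤ j → pos (rt i) ≤ pos (rt j))
    (k : Object V → ℕ)
    -- demands are positive
    (d : Fin n → ℕ) (hd : ∀ i, 1 ≤ d i)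
    -- every subtree has at least one leaf other than its root, and `M` bounds these numbers
    (M : ℕ) (hM1 : ∀ i, 1 ≤ leavesCnt G (S i) (rt i))
    (hM : ∀ i, leavesCnt G (S i) (rt i) ≤ M) :
    FeasibleM G S k d (greedyM G S k d n) ∧
    ∀ m : Fin n → ℕ, FeasibleM G S k d m →
      ∑ i, m i ≤ M * ∑ i, greedyM G S k d n i := by
  constructor
  · exact ⟨fun i => MGGreedy.greedy_le_d G S k d i, fun o => MGGreedy.mload_le_k G S k d n o⟩
  · intro m hm
    have hload0 : ∀ o, mload G S (greedyM G S k d 0) o = 0 := by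
      intro o
      unfold mload greedyM
      simp
    have hkey := main_claim G hTree r S hsub rt hrtmem hrtmin pos hposinj hpost hcontig hord
      k d M hM1 hM n 0 (by omega) m hm.1 (fun j hj => absurd hj (by omega))
      (fun o => by rw [hload0 o, add_zero]; exact hm.2 o)
    have hfil : univ.filter (fun j : Fin n => 0 ≤ j.val) = univ :=
      Finset.filter_true_of_mem (fun j _ => Nat.zero_le _)
    rwa [hfil] at hkey
end

section
/- Let i ∈ {1, …, n} and let S ⊆ 𝒯 be a feasible set with T_i ∉ S such that S ∪ {T_i} is infeasible but (S ∩ 𝒯_{i−1}) ∪ {T_i} is feasible. Then every object of T that is overloaded in S ∪ {T_i} is tight in S and is an object of the subtree T_i, and there exists a set 𝒯′ ⊆ S \ 𝒯_{i−1} with |𝒯′| ≤ leaves(T_i) such that (S ∪ {T_i}) \ 𝒯′ is feasible. -/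
/-!
Setting: `G` is a finite tree rooted at `r`. A family `S : Fin n → Finset V` of
vertex sets of subtrees (connected subgraphs) of `G` is given; since connected
subgraphs of a tree are induced, a subtree is faithfully represented by its
vertex set. An *object* of the tree is a vertex or an edge. Capacities are
given by `k`, loads count the subtrees containing an object, feasibility means
no object is overloaded. The subtrees are indexed so that their roots appear
in nondecreasing order along some post-order (bottom-up) traversal of the tree,
which is encoded by an injective numbering `pos` of the vertices such that
descendants of any vertex `v` appear (contiguously) before `v`.
-/

open Finset

attribute [local instance] Classical.propDecidable

/-- The load induced by the subfamily `U` on the object `o`. -/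
noncomputable def load {V : Type} {n : ℕ} (G : SimpleGraph V) (S : Fin n → Finset V)
    (U : Finset (Fin n)) (o : Object V) : ℕ :=
  (U.filter fun i => ContainsObj G (S i) o).card

/-- A subfamily of subtrees is feasible if it does not overload any object. -/
def Feasible {V : Type} {n : ℕ} (G : SimpleGraph V) (S : Fin n → Finset V)
    (k : Object V → ℕ) (U : Finset (Fin n)) : Prop :=
  ∀ o : Object V, load G S U o ≤ k o

/-- The index set `𝒯_i` of the first `i` subtrees. -/
noncomputable def firstIdx (n i : ℕ) : Finset (Fin n) :=
  univ.filter fun j => (j : ℕ) < i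

/-- `ALG_i`: the greedy solution after the first `i` subtrees have been considered. -/
noncomputable def greedy {V : Type} {n : ℕ} (G : SimpleGraph V) (S : Fin n → Finset V)
    (k : Object V → ℕ) : ℕ → Finset (Fin n)
  | 0 => ∅
  | m + 1 =>
    if h : m < n then
      if Feasible G S k (insert ⟨m, h⟩ (greedy G S k m)) then
        insert ⟨m, h⟩ (greedy G S k m)
      else greedy G S k m
    else greedy G S k m

section TreeHelpers

open SimpleGraph

variable {V : Type}


/-- `x` lies between `u` and `v` (i.e. on the unique `u`–`v` path). -/
def TBtw (G : SimpleGraph V) (u x v : V) : Prop :=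
  G.dist u v = G.dist u x + G.dist x v

lemma tbtw_left (G : SimpleGraph V) (u v : V) : TBtw G u u v := by
  simp [TBtw]

lemma tbtw_right (G : SimpleGraph V) (u v : V) : TBtw G u v v := by
  simp [TBtw]

lemma tbtw_trans {G : SimpleGraph V} (hc : G.Connected) {u x y z : V}
    (h1 : TBtw G u x y) (h2 : TBtw G u y z) : TBtw G u x z := by
  have t1 := hc.dist_triangle (u := x) (v := y) (w := z)
  have t2 := hc.dist_triangle (u := u) (v := x) (w := z)
  unfold TBtw at *; omega

lemma tbtw_trans' {G : SimpleGraph V} (hc : G.Connected) {a b c d : V}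
    (h1 : TBtw G a b c) (h2 : TBtw G a c d) : TBtw G b c d := by
  have t1 := hc.dist_triangle (u := a) (v := b) (w := d)
  have t2 := hc.dist_triangle (u := b) (v := c) (w := d)
  unfold TBtw at *; omega

lemma path_length_eq {G : SimpleGraph V} (hT : G.IsTree) {u v : V} {p : G.Walk u v}
    (hp : p.IsPath) : p.length = G.dist u v := by
  obtain ⟨q, hq, hql⟩ := hT.isConnected.exists_path_of_dist u v
  obtain ⟨w, -, huniq⟩ := hT.existsUnique_path u v
  rw [huniq p hp, ← huniq q hq, hql]

lemma tbtw_iff_mem_support {G : SimpleGraph V} (hT : G.IsTree) {u v x : V} {p : G.Walk u v}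
    (hp : p.IsPath) : TBtw G u x v ↔ x ∈ p.support := by
  constructor
  · intro hb
    obtain ⟨q1, hq1, hl1⟩ := hT.isConnected.exists_path_of_dist u x
    obtain ⟨q2, hq2, hl2⟩ := hT.isConnected.exists_path_of_dist x v
    have hlen : (q1.append q2).length = G.dist u v := by
      rw [SimpleGraph.Walk.length_append, hl1, hl2, hb]
    have hpath : (q1.append q2).IsPath := (q1.append q2).isPath_of_length_eq_dist hlen
    obtain ⟨w, -, huniq⟩ := hT.existsUnique_path u v
    have heq : q1.append q2 = p := by rw [huniq _ hpath, huniq p hp]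
    rw [← heq, SimpleGraph.Walk.mem_support_append_iff]
    exact Or.inl q1.end_mem_support
  · intro hx
    have h1 : G.dist u x ≤ (p.takeUntil x hx).length := G.dist_le _
    have h2 : G.dist x v ≤ (p.dropUntil x hx).length := G.dist_le _
    have h3 : (p.takeUntil x hx).length + (p.dropUntil x hx).length = p.length := by
      rw [← SimpleGraph.Walk.length_append, SimpleGraph.Walk.take_spec]
    have h4 : p.length = G.dist u v := path_length_eq hT hp
    have h5 := hT.isConnected.dist_triangle (u := u) (v := x) (w := v)
    unfold TBtw; omega

lemma tbtw_cmp {G : SimpleGraph V} (hT : G.IsTree) {u v a b : V}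
    (ha : TBtw G u a v) (hb : TBtw G u b v) (hle : G.dist u a ≤ G.dist u b) :
    TBtw G u a b := by
  obtain ⟨p, hp, -⟩ := hT.isConnected.exists_path_of_dist u v
  have ha' : a ∈ p.support := (tbtw_iff_mem_support hT hp).1 ha
  have hb' : b ∈ p.support := (tbtw_iff_mem_support hT hp).1 hb
  by_cases hm : a ∈ (p.takeUntil b hb').support
  · exact (tbtw_iff_mem_support hT (hp.takeUntil hb')).2 hm
  · have hm2 : a ∈ (p.dropUntil b hb').support := by
      have := ha'
      rw [← SimpleGraph.Walk.take_spec p hb',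
        SimpleGraph.Walk.mem_support_append_iff] at this
      tauto
    have hbav : TBtw G b a v := (tbtw_iff_mem_support hT (hp.dropUntil hb')).2 hm2
    have t1 := hT.isConnected.dist_triangle (u := u) (v := a) (w := v)
    have hz : G.dist b a = 0 := by unfold TBtw at *; omega
    have : b = a := (hT.isConnected.dist_eq_zero_iff).1 hz
    subst this
    exact tbtw_right G u b

lemma exists_path_in {G : SimpleGraph V} {s : Finset V}
    (hs : (G.induce (s : Set V)).Connected) {u v : V} (hu : u ∈ s) (hv : v ∈ s) :
    ∃ q : G.Walk u v, q.IsPath ∧ ∀ x ∈ q.support, x ∈ s := by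
  obtain ⟨w⟩ := hs ⟨u, hu⟩ ⟨v, hv⟩
  let W : G.Walk u v := w.map (SimpleGraph.Embedding.induce (s : Set V)).toHom
  refine ⟨W.bypass, W.bypass_isPath, fun x hx => ?_⟩
  have hx' : x ∈ W.support := W.support_bypass_subset hx
  rw [show W.support = w.support.map _ from SimpleGraph.Walk.support_map _ _, List.mem_map] at hx'
  obtain ⟨⟨y, hy⟩, -, rfl⟩ := hx'
  exact hy

lemma mem_of_tbtw {G : SimpleGraph V} (hT : G.IsTree) {s : Finset V}
    (hs : (G.induce (s : Set V)).Connected) {u v x : V} (hu : u ∈ s) (hv : v ∈ s)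
    (hb : TBtw G u x v) : x ∈ s := by
  obtain ⟨q, hq, hmem⟩ := exists_path_in hs hu hv
  exact hmem x ((tbtw_iff_mem_support hT hq).1 hb)

lemma tbtw_root {G : SimpleGraph V} (hT : G.IsTree) {s : Finset V}
    (hs : (G.induce (s : Set V)).Connected) {r rt : V} (hrt : rt ∈ s)
    (hmin : ∀ v ∈ s, G.dist r rt ≤ G.dist r v) {v : V} (hv : v ∈ s) :
    TBtw G r rt v := by
  obtain ⟨p, hp, hpl⟩ := hT.isConnected.exists_path_of_dist r rt
  obtain ⟨q, hq, hqmem⟩ := exists_path_in hs hrt hv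
  have hdisj : ∀ x ∈ p.support, x ∉ q.support.tail := by
    intro x hxp hxq
    have hxq' : x ∈ q.support := List.mem_of_mem_tail hxq
    have hxs : x ∈ s := hqmem x hxq'
    have h1 : TBtw G r x rt := (tbtw_iff_mem_support hT hp).2 hxp
    have h2 : G.dist r rt ≤ G.dist r x := hmin x hxs
    have hz : G.dist x rt = 0 := by unfold TBtw at h1; omega
    have hx : x = rt := (hT.isConnected.dist_eq_zero_iff).1 hz
    subst hx
    have hnd := hq.support_nodup
    rw [q.support_eq_cons] at hnd
    exact (List.nodup_cons.1 hnd).1 hxq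
  have hnodup : (p.append q).support.Nodup := by
    rw [SimpleGraph.Walk.support_append]
    refine List.Nodup.append hp.support_nodup ?_ ?_
    · have hnd := hq.support_nodup
      rw [q.support_eq_cons] at hnd
      exact (List.nodup_cons.1 hnd).2
    · exact fun x hx1 hx2 => hdisj x hx1 hx2
  have hpath : (p.append q).IsPath := SimpleGraph.Walk.IsPath.mk' hnodup
  have hlen : (p.append q).length = G.dist r v := path_length_eq hT hpath
  rw [SimpleGraph.Walk.length_append, hpl] at hlen
  have hql : G.dist rt v ≤ q.length := G.dist_le q
  have ht := hT.isConnected.dist_triangle (u := r) (v := rt) (w := v)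
  unfold TBtw; omega

lemma adj_tbtw_or {G : SimpleGraph V} (hT : G.IsTree) (rt : V) {a b : V}
    (hab : G.Adj a b) : TBtw G rt a b ∨ TBtw G rt b a := by
  obtain ⟨p, hp, hpl⟩ := hT.isConnected.exists_path_of_dist rt a
  by_cases hm : b ∈ p.support
  · exact Or.inr ((tbtw_iff_mem_support hT hp).2 hm)
  · left
    have hpath : (p.append (SimpleGraph.Walk.cons hab SimpleGraph.Walk.nil)).IsPath := by
      refine SimpleGraph.Walk.IsPath.mk' ?_
      rw [SimpleGraph.Walk.support_append]
      refine List.Nodup.append hp.support_nodup (by simp) ?_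
      intro x hx1 hx2
      simp only [SimpleGraph.Walk.support_cons, SimpleGraph.Walk.support_nil] at hx2
      simp only [List.tail_cons, List.mem_singleton] at hx2
      subst hx2; exact hm hx1
    have hlen := path_length_eq hT hpath
    rw [SimpleGraph.Walk.length_append, hpl] at hlen
    simp only [SimpleGraph.Walk.length_cons, SimpleGraph.Walk.length_nil] at hlen
    have hd1 : G.dist a b = 1 := (G.dist_eq_one_iff_adj).2 hab
    unfold TBtw; omega

lemma exists_leaf {G : SimpleGraph V} [DecidableEq V] (hT : G.IsTree) {s : Finset V}
    (hs : (G.induce (s : Set V)).Connected) {rt : V}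
    (hne : (s.filter fun v => v ≠ rt ∧ (s.filter fun u => G.Adj v u).card ≤ 1).Nonempty)
    {x : V} (hx : x ∈ s) :
    ∃ ℓ ∈ s.filter fun v => v ≠ rt ∧ (s.filter fun u => G.Adj v u).card ≤ 1,
      TBtw G rt x ℓ := by
  classical
  by_cases hxr : x = rt
  · obtain ⟨ℓ, hℓ⟩ := hne
    exact ⟨ℓ, hℓ, by subst hxr; exact tbtw_left G x ℓ⟩
  · set C : Finset V := s.filter (fun v => TBtw G rt x v) with hC
    have hCne : C.Nonempty := ⟨x, by simp [hC, hx, tbtw_right]⟩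
    obtain ⟨ℓ, hℓC, hmax⟩ := C.exists_max_image (fun v => G.dist rt v) hCne
    have hℓs : ℓ ∈ s := (Finset.mem_filter.1 hℓC).1
    have hbxℓ : TBtw G rt x ℓ := (Finset.mem_filter.1 hℓC).2
    have hpos : 0 < G.dist rt x :=
      hT.isConnected.pos_dist_of_ne (fun h => hxr h.symm)
    have hℓrt : ℓ ≠ rt := by
      intro h
      rw [h] at hbxℓ
      have h0 : G.dist rt rt = 0 := SimpleGraph.dist_self
      unfold TBtw at hbxℓ; omega
    -- every neighbour of ℓ in s is between rt and ℓ
    have hnb : ∀ z ∈ s, G.Adj ℓ z → TBtw G rt z ℓ := by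
      intro z hz hadj
      rcases adj_tbtw_or hT rt hadj with hb | hb
      · exfalso
        have hzC : z ∈ C := by
          simp only [hC, Finset.mem_filter]
          exact ⟨hz, tbtw_trans hT.isConnected hbxℓ hb⟩
        have hle := hmax z hzC
        have hd1 : G.dist ℓ z = 1 := (G.dist_eq_one_iff_adj).2 hadj
        unfold TBtw at hb; omega
      · exact hb
    have hdeg : (s.filter fun u => G.Adj ℓ u).card ≤ 1 := by
      by_contra hc
      push_neg at hc
      obtain ⟨u, hu, w, hw, huw⟩ := Finset.one_lt_card.1 hc
      rw [Finset.mem_filter] at hu hw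
      have hbu := hnb u hu.1 hu.2
      have hbw := hnb w hw.1 hw.2
      have hdu : G.dist u ℓ = 1 := (G.dist_eq_one_iff_adj).2 hu.2.symm
      have hdw : G.dist w ℓ = 1 := (G.dist_eq_one_iff_adj).2 hw.2.symm
      have hle : G.dist rt u ≤ G.dist rt w := by unfold TBtw at hbu hbw; omega
      have hcmp := tbtw_cmp hT hbu hbw hle
      have : G.dist u w = 0 := by unfold TBtw at hcmp hbu hbw; omega
      exact huw ((hT.isConnected.dist_eq_zero_iff).1 this)
    exact ⟨ℓ, Finset.mem_filter.2 ⟨hℓs, hℓrt, hdeg⟩, hbxℓ⟩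

/-- The set of endpoint vertices of an object. -/
def Ends {V : Type} : Object V → Set V
  | Sum.inl x => {x}
  | Sum.inr e => {x | x ∈ e}

lemma ends_subset {V : Type} {G : SimpleGraph V} {s : Finset V} {o : Object V}
    (h : ContainsObj G s o) : ∀ x ∈ Ends o, x ∈ s := by
  cases o with
  | inl a => intro x hx; exact Set.mem_singleton_iff.1 hx ▸ h
  | inr e => exact h.2

lemma containsObj_mono {V : Type} {G : SimpleGraph V} {s t : Finset V} {o : Object V}
    (h : ContainsObj G s o) (hsub : ∀ x ∈ Ends o, x ∈ t) : ContainsObj G t o := by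
  cases o with
  | inl a => exact hsub a rfl
  | inr e => exact ⟨h.1, hsub⟩

lemma exists_deep {V : Type} {G : SimpleGraph V} (hT : G.IsTree) (rt : V) {s : Finset V}
    {o : Object V} (h : ContainsObj G s o) :
    ∃ y ∈ Ends o, ∀ x ∈ Ends o, TBtw G rt x y := by
  cases o with
  | inl a =>
    exact ⟨a, rfl, fun x hx => Set.mem_singleton_iff.1 hx ▸ tbtw_right G rt a⟩
  | inr e =>
    obtain ⟨he, -⟩ := h
    revert he
    refine Sym2.ind (fun a b he => ?_) e
    have hadj : G.Adj a b := he
    have hmem : ∀ x : V, x ∈ Ends (Sum.inr s(a, b) : Object V) ↔ x = a ∨ x = b :=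
      fun x => Sym2.mem_iff
    rcases adj_tbtw_or hT rt hadj with hb | hb
    · refine ⟨b, (hmem b).2 (Or.inr rfl), fun x hx => ?_⟩
      rcases (hmem x).1 hx with rfl | rfl
      · exact hb
      · exact tbtw_right G rt x
    · refine ⟨a, (hmem a).2 (Or.inl rfl), fun x hx => ?_⟩
      rcases (hmem x).1 hx with rfl | rfl
      · exact tbtw_right G rt x
      · exact hb

end TreeHelpers

/-- **Lemma (exchange step).** Let `Sf` be a feasible set with `T_i ∉ Sf` such that
`Sf ∪ {T_i}` is infeasible but `(Sf ∩ 𝒯_{i-1}) ∪ {T_i}` is feasible. Then every object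
overloaded in `Sf ∪ {T_i}` is tight in `Sf` and is an object of the subtree `T_i`, and
there is a set `T' ⊆ Sf \ 𝒯_{i-1}` with `|T'| ≤ leaves(T_i)` such that
`(Sf ∪ {T_i}) \ T'` is feasible. -/


theorem statement11
    {V : Type} [Fintype V] [DecidableEq V] (G : SimpleGraph V)
    (hTree : G.IsTree) (r : V)
    {n : ℕ} (S : Fin n → Finset V)
    -- each `S i` is (the vertex set of) a subtree, i.e. a connected subgraph of `G`
    (hsub : ∀ i, (G.induce (S i : Set V)).Connected)
    -- `rt i` is the vertex of the subtree `S i` closest to the root `r`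
    (rt : Fin n → V) (hrtmem : ∀ i, rt i ∈ S i)
    (hrtmin : ∀ i, ∀ v ∈ S i, G.dist r (rt i) ≤ G.dist r v)
    -- `pos` is a post-order (bottom-up) traversal of the tree ...
    (pos : V → ℕ) (hposinj : Function.Injective pos)
    (hpost : ∀ u v : V, IsAnc G r v u → pos u ≤ pos v)
    (hcontig : ∀ u x v : V, IsAnc G r v u → pos u ≤ pos x → pos x ≤ pos v → IsAnc G r v x)
    -- ... along which the roots of the subtrees appear in nondecreasing order
    (hord : ∀ i j : Fin n, i ≤ j → pos (rt i) ≤ pos (rt j))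
    (k : Object V → ℕ)
    -- every subtree has at least one leaf other than its root
    (hM1 : ∀ i, 1 ≤ leavesCnt G (S i) (rt i))
    -- the hypotheses on `i` and the feasible set `Sf`
    (i : Fin n) (Sf : Finset (Fin n))
    (hSfeas : Feasible G S k Sf)
    (hiS : i ∉ Sf)
    (hinfeas : ¬ Feasible G S k (insert i Sf))
    (hfeas2 : Feasible G S k (insert i (Sf.filter fun j => j < i))) :
    (∀ o : Object V, k o < load G S (insert i Sf) o →
        load G S Sf o = k o ∧ ContainsObj G (S i) o) ∧
    ∃ T' ⊆ Sf.filter fun j => ¬ j < i,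
      T'.card ≤ leavesCnt G (S i) (rt i) ∧
      Feasible G S k ((insert i Sf) \ T') := by
  classical
  have hconn := hTree.isConnected
  have hload_ins : ∀ (U : Finset (Fin n)) (j : Fin n), j ∉ U → ∀ o : Object V,
      load G S (insert j U) o = load G S U o + (if ContainsObj G (S j) o then 1 else 0) := by
    intro U j hj o
    unfold load
    rw [Finset.filter_insert]
    split
    · rw [Finset.card_insert_of_notMem (fun hc => hj (Finset.mem_filter.1 hc).1)]
    · rw [add_zero]
  have part1 : ∀ o : Object V, k o < load G S (insert i Sf) o →
      load G S Sf o = k o ∧ ContainsObj G (S i) o := by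
    intro o ho
    have h1 : load G S Sf o ≤ k o := hSfeas o
    have h2 := hload_ins Sf i hiS o
    by_cases hc : ContainsObj G (S i) o
    · rw [if_pos hc] at h2; exact ⟨by omega, hc⟩
    · rw [if_neg hc, add_zero] at h2; omega
  refine ⟨part1, ?_⟩
  have hexj : ∀ o : Object V, k o < load G S (insert i Sf) o →
      ∃ j, j ∈ Sf ∧ ¬ j < i ∧ ContainsObj G (S j) o := by
    intro o ho
    obtain ⟨ht, hci⟩ := part1 o ho
    by_contra hno
    push_neg at hno
    have hsubf : Sf.filter (fun j => ContainsObj G (S j) o) ⊆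
        (Sf.filter fun j => j < i).filter (fun j => ContainsObj G (S j) o) := by
      intro j hj
      rw [Finset.mem_filter] at hj
      rw [Finset.mem_filter, Finset.mem_filter]
      by_cases hji : j < i
      · exact ⟨⟨hj.1, hji⟩, hj.2⟩
      · exact absurd hj.2 (hno j hj.1 (le_of_not_gt hji))
    have hle : load G S Sf o ≤ load G S (Sf.filter fun j => j < i) o :=
      Finset.card_le_card hsubf
    have hiF : i ∉ Sf.filter (fun j => j < i) := fun hc => hiS (Finset.mem_filter.1 hc).1
    have h2 := hload_ins _ i hiF o
    rw [if_pos hci] at h2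
    have h3 := hfeas2 o
    omega
  have hrootmem : ∀ j : Fin n, ¬ j < i → ∀ y, y ∈ S i → y ∈ S j → rt i ∈ S j := by
    intro j hj y hyi hyj
    have h1 : TBtw G r (rt i) y := tbtw_root hTree (hsub i) (hrtmem i) (hrtmin i) hyi
    have h2 : TBtw G r (rt j) y := tbtw_root hTree (hsub j) (hrtmem j) (hrtmin j) hyj
    have hpos1 : pos (rt i) ≤ pos (rt j) := hord i j (le_of_not_gt hj)
    rcases le_total (G.dist r (rt i)) (G.dist r (rt j)) with h | h
    · have h3 : TBtw G r (rt i) (rt j) := tbtw_cmp hTree h1 h2 h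
      have h4 : pos (rt j) ≤ pos (rt i) := hpost (rt j) (rt i) h3
      have h5 : rt i = rt j := hposinj (le_antisymm hpos1 h4)
      rw [h5]; exact hrtmem j
    · have h3 : TBtw G r (rt j) (rt i) := tbtw_cmp hTree h2 h1 h
      have h4 : TBtw G (rt j) (rt i) y := tbtw_trans' hconn h3 h1
      exact mem_of_tbtw hTree (hsub j) (hrtmem j) hyj h4
  have hLne : ((S i).filter fun v => v ≠ rt i ∧
      ((S i).filter fun u => G.Adj v u).card ≤ 1).Nonempty :=
    Finset.card_pos.1 (hM1 i)
  have key : ∀ ℓ : V, ((S i).filter (fun y => ∃ o : Object V,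
        k o < load G S (insert i Sf) o ∧
        (∀ x ∈ Ends o, TBtw G (rt i) x ℓ) ∧ y ∈ Ends o)).Nonempty →
      ∃ j : Fin n, (j ∈ Sf ∧ ¬ j < i) ∧
        ∀ o : Object V, k o < load G S (insert i Sf) o →
          (∀ x ∈ Ends o, TBtw G (rt i) x ℓ) → ContainsObj G (S j) o := by
    intro ℓ hne
    obtain ⟨y, hyF, hymax⟩ :=
      Finset.exists_max_image _ (fun v => G.dist (rt i) v) hne
    rw [Finset.mem_filter] at hyF
    obtain ⟨hyS, o₀, ho₀, hends₀, hyE⟩ := hyF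
    obtain ⟨j, hjSf, hji, hjc⟩ := hexj o₀ ho₀
    have hyj : y ∈ S j := ends_subset hjc y hyE
    have hrtj : rt i ∈ S j := hrootmem j hji y hyS hyj
    refine ⟨j, ⟨hjSf, hji⟩, ?_⟩
    intro o ho hends
    have hci : ContainsObj G (S i) o := (part1 o ho).2
    refine containsObj_mono hci ?_
    intro x hxE
    have hxS : x ∈ S i := ends_subset hci x hxE
    have hxF : x ∈ (S i).filter (fun y => ∃ o : Object V,
        k o < load G S (insert i Sf) o ∧
        (∀ x ∈ Ends o, TBtw G (rt i) x ℓ) ∧ y ∈ Ends o) :=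
      Finset.mem_filter.2 ⟨hxS, o, ho, hends, hxE⟩
    have hle := hymax x hxF
    have hbxy : TBtw G (rt i) x y := tbtw_cmp hTree (hends x hxE) (hends₀ y hyE) hle
    exact mem_of_tbtw hTree (hsub j) hrtj hyj hbxy
  set Q := ((S i).filter fun v => v ≠ rt i ∧
      ((S i).filter fun u => G.Adj v u).card ≤ 1).filter
      (fun ℓ => ((S i).filter (fun y => ∃ o : Object V,
        k o < load G S (insert i Sf) o ∧
        (∀ x ∈ Ends o, TBtw G (rt i) x ℓ) ∧ y ∈ Ends o)).Nonempty) with hQdef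
  have hf : ∀ ℓ ∈ Q, ∃ j : Fin n, (j ∈ Sf ∧ ¬ j < i) ∧
      ∀ o : Object V, k o < load G S (insert i Sf) o →
        (∀ x ∈ Ends o, TBtw G (rt i) x ℓ) → ContainsObj G (S j) o := by
    intro ℓ hℓ
    exact key ℓ (Finset.mem_filter.1 hℓ).2
  set f : V → Fin n := fun ℓ =>
    if h : ((S i).filter (fun y => ∃ o : Object V,
        k o < load G S (insert i Sf) o ∧
        (∀ x ∈ Ends o, TBtw G (rt i) x ℓ) ∧ y ∈ Ends o)).Nonempty
    then (key ℓ h).choose else i with hfdef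
  have hfspec : ∀ ℓ ∈ Q, (f ℓ ∈ Sf ∧ ¬ f ℓ < i) ∧
      ∀ o : Object V, k o < load G S (insert i Sf) o →
        (∀ x ∈ Ends o, TBtw G (rt i) x ℓ) → ContainsObj G (S (f ℓ)) o := by
    intro ℓ hℓ
    have h := (Finset.mem_filter.1 hℓ).2
    rw [hfdef]
    simp only [dif_pos h]
    exact (key ℓ h).choose_spec
  refine ⟨Q.image f, ?_, ?_, ?_⟩
  · intro j hj
    obtain ⟨ℓ, hℓ, rfl⟩ := Finset.mem_image.1 hj
    exact Finset.mem_filter.2 ⟨((hfspec ℓ hℓ).1).1, ((hfspec ℓ hℓ).1).2⟩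
  · calc (Q.image f).card ≤ Q.card := Finset.card_image_le
      _ ≤ _ := Finset.card_filter_le _ _
  · intro o
    by_cases ho : k o < load G S (insert i Sf) o
    · obtain ⟨ht, hci⟩ := part1 o ho
      obtain ⟨y, hyE, hdeep⟩ := exists_deep hTree (rt i) hci
      have hyS : y ∈ S i := ends_subset hci y hyE
      obtain ⟨ℓ, hℓL, hbyℓ⟩ := exists_leaf hTree (hsub i) hLne hyS
      have hends : ∀ x ∈ Ends o, TBtw G (rt i) x ℓ := fun x hx =>
        tbtw_trans hconn (hdeep x hx) hbyℓ
      have hQℓ : ℓ ∈ Q := by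
        rw [hQdef, Finset.mem_filter]
        exact ⟨hℓL, ⟨y, Finset.mem_filter.2 ⟨hyS, o, ho, hends, hyE⟩⟩⟩
      have hcov : ContainsObj G (S (f ℓ)) o := (hfspec ℓ hQℓ).2 o ho hends
      have hfmem : f ℓ ∈ Q.image f := Finset.mem_image_of_mem f hQℓ
      have hfSf : f ℓ ∈ Sf := ((hfspec ℓ hQℓ).1).1
      have hsub2 : ((insert i Sf \ Q.image f).filter fun j => ContainsObj G (S j) o) ⊆
          ((insert i Sf).filter fun j => ContainsObj G (S j) o).erase (f ℓ) := by
        intro a ha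
        rw [Finset.mem_filter, Finset.mem_sdiff] at ha
        refine Finset.mem_erase.2 ⟨?_, Finset.mem_filter.2 ⟨ha.1.1, ha.2⟩⟩
        intro hc; exact ha.1.2 (hc ▸ hfmem)
      have hfl : f ℓ ∈ (insert i Sf).filter fun j => ContainsObj G (S j) o :=
        Finset.mem_filter.2 ⟨Finset.mem_insert_of_mem hfSf, hcov⟩
      have hcard := Finset.card_le_card hsub2
      rw [Finset.card_erase_of_mem hfl] at hcard
      have h2 := hload_ins Sf i hiS o
      rw [if_pos hci] at h2
      unfold load at h2 ht ⊢
      omega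
    · have hle : load G S (insert i Sf \ Q.image f) o ≤ load G S (insert i Sf) o :=
        Finset.card_le_card (Finset.filter_subset_filter _ Finset.sdiff_subset)
      omega
end
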